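/- Let (xₙ)ₙ≥0 be a positive sequence satisfying xₙ ≥ c·α^{n−k}·x_k for all n ≥ k ≥ 0 with α > 1, c > 0, and let V be a nonnegative integrable random variable. Then Σ_{n≥0} E[V²·1_{V ≤ xₙ}]/xₙ ≤ (α/(c(α−1))) · E[V²/((c·x₀) ∨ V)]. -/

import Mathlib

open MeasureTheory

lemma ptwise_bound (x : ℕ → ℝ) (c α : ℝ) (hc : 0 < c) (hα : 1 < α) (hc1 : c ≤ 1)
    (hxpos : ∀ n, 0 < x n)
    (hgrowth : ∀ n k : ℕ, k ≤ n → c * α ^ (n - k) * x k ≤ x n)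
    (v : ℝ) (hv : 0 ≤ v) (s : Finset ℕ) :
    ∑ n ∈ s, (if v ≤ x n then v ^ 2 else 0) / x n
      ≤ (α / (c * (α - 1))) * (v ^ 2 / max (c * x 0) v) := by
  classical
  have hα0 : (0:ℝ) < α := lt_trans one_pos hα
  have hα1 : (0:ℝ) < α - 1 := by linarith
  have hm : 0 < max (c * x 0) v := lt_max_of_lt_left (mul_pos hc (hxpos 0))
  have hCnn : 0 ≤ α / (c * (α - 1)) := by positivity
  by_cases hex : ∃ n, v ≤ x n
  · set m := max (c * x 0) v with hmdef
    set N := Nat.find hex with hNdef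
    have hN : v ≤ x N := Nat.find_spec hex
    have hcx : c * x 0 ≤ x N := by
      rcases Nat.eq_zero_or_pos N with h0 | hpos
      · rw [h0]
        nlinarith [hxpos 0]
      · have hlt : x (N - 1) < v := lt_of_not_ge (Nat.find_min hex (by omega))
        have hg := hgrowth (N - 1) 0 (Nat.zero_le _)
        have hone : (1:ℝ) ≤ α ^ (N - 1 - 0) := one_le_pow₀ hα.le
        nlinarith [hxpos 0]
    have hmN : m ≤ x N := max_le hcx hN
    have hkey : ∀ n, N ≤ n → c * α ^ (n - N) * m ≤ x n := by
      intro n hn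
      have h1 : c * α ^ (n - N) * m ≤ c * α ^ (n - N) * x N := by
        have h2 : (0:ℝ) ≤ c * α ^ (n - N) := by positivity
        nlinarith
      exact h1.trans (hgrowth n N hn)
    have hA : 0 ≤ v ^ 2 / (c * m) := by positivity
    set u : ℕ → ℝ := fun n => if N ≤ n then v ^ 2 / (c * m) * (α⁻¹) ^ (n - N) else 0
      with hudef
    have hu : ∀ n, 0 ≤ u n := by
      intro n
      simp only [hudef]
      split
      · positivity
      · exact le_refl 0
    have hterm : ∀ n, (if v ≤ x n then v ^ 2 else 0) / x n ≤ u n := by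
      intro n
      by_cases hvx : v ≤ x n
      · have hNn : N ≤ n := Nat.find_le hvx
        simp only [hudef, if_pos hvx, if_pos hNn]
        have hden : 0 < c * α ^ (n - N) * m := by positivity
        have hrw : c * α ^ (n - N) * m = c * m * α ^ (n - N) := by ring
        calc v ^ 2 / x n ≤ v ^ 2 / (c * α ^ (n - N) * m) :=
              div_le_div_of_nonneg_left (sq_nonneg v) hden (hkey n hNn)
          _ = v ^ 2 / (c * m) * α⁻¹ ^ (n - N) := by
              rw [hrw, ← div_div, div_eq_mul_inv (v ^ 2 / (c * m)), inv_pow]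
      · simp only [if_neg hvx, zero_div]
        exact hu n
    have hgeo : Summable (fun n : ℕ => (α⁻¹) ^ n) :=
      summable_geometric_of_lt_one (by positivity) (inv_lt_one_of_one_lt₀ hα)
    have hbound : ∀ n, u n ≤ (v ^ 2 / (c * m) * α ^ N) * (α⁻¹) ^ n := by
      intro n
      simp only [hudef]
      split
      · rename_i hn
        apply le_of_eq
        rw [inv_pow, inv_pow, mul_assoc]
        congr 1
        have hne : (α:ℝ) ^ n ≠ 0 := by positivity
        have hne2 : (α:ℝ) ^ (n - N) ≠ 0 := by positivity
        field_simp
        rw [← pow_add]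
        congr 1
        omega
      · positivity
    have husum : Summable u := Summable.of_nonneg_of_le hu hbound (hgeo.mul_left _)
    have htsum : ∑' n, u n = v ^ 2 / (c * m) * (1 - α⁻¹)⁻¹ := by
      have hinj : Function.Injective (· + N : ℕ → ℕ) := add_left_injective N
      have hsupp : Function.support u ⊆ Set.range (· + N : ℕ → ℕ) := by
        intro n hn
        by_cases hNn : N ≤ n
        · exact ⟨n - N, by simpa using Nat.sub_add_cancel hNn⟩
        · exact absurd (by simp [hudef, if_neg hNn]) hn
      rw [← hinj.tsum_eq hsupp]
      have heq : ∀ k : ℕ, u (k + N) = v ^ 2 / (c * m) * (α⁻¹) ^ k := by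
        intro k
        simp [hudef, Nat.le_add_left, Nat.add_sub_cancel]
      calc ∑' k, u (k + N) = ∑' k, v ^ 2 / (c * m) * (α⁻¹) ^ k := by
            exact tsum_congr heq
        _ = v ^ 2 / (c * m) * (1 - α⁻¹)⁻¹ := by
            rw [tsum_mul_left,
              tsum_geometric_of_lt_one (by positivity) (inv_lt_one_of_one_lt₀ hα)]
    calc ∑ n ∈ s, (if v ≤ x n then v ^ 2 else 0) / x n
        ≤ ∑ n ∈ s, u n := Finset.sum_le_sum fun n _ => hterm n
      _ ≤ ∑' n, u n := husum.sum_le_tsum s (fun n _ => hu n)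
      _ = v ^ 2 / (c * m) * (1 - α⁻¹)⁻¹ := htsum
      _ = α / (c * (α - 1)) * (v ^ 2 / m) := by
          have hm' : m ≠ 0 := ne_of_gt hm
          field_simp
  · push_neg at hex
    have hz : ∀ n ∈ s, (if v ≤ x n then v ^ 2 else 0) / x n = 0 := by
      intro n _
      rw [if_neg (not_le.mpr (hex n)), zero_div]
    rw [Finset.sum_congr rfl hz, Finset.sum_const, smul_zero]
    positivity

/-- For a positive sequence `xₙ ≥ c·α^{n−k}·x_k` (`α > 1`, `c > 0`) and a nonnegative
integrable random variable `V`: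
`Σₙ E[V²·1_{V ≤ xₙ}]/xₙ ≤ (α/(c(α−1))) · E[V²/((c·x₀) ∨ V)]`. -/
theorem truncated_second_moment_sum_bound {Ω : Type*} [MeasurableSpace Ω]
    (μ : Measure Ω) [IsProbabilityMeasure μ]
    (x : ℕ → ℝ) (c α : ℝ) (hc : 0 < c) (hα : 1 < α)
    (hxpos : ∀ n, 0 < x n)
    (hgrowth : ∀ n k : ℕ, k ≤ n → c * α ^ (n - k) * x k ≤ x n)
    (V : Ω → ℝ) (hVnn : ∀ ω, 0 ≤ V ω) (hVint : Integrable V μ)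
    (hVmeas : Measurable V) :
    ∑' n : ℕ, (∫ ω, (if V ω ≤ x n then (V ω) ^ 2 else 0) ∂μ) / x n
      ≤ (α / (c * (α - 1))) * ∫ ω, (V ω) ^ 2 / max (c * x 0) (V ω) ∂μ := by
  have hα0 : (0:ℝ) < α := lt_trans one_pos hα
  have hα1 : (0:ℝ) < α - 1 := by linarith
  have hc1 : c ≤ 1 := by
    have := hgrowth 0 0 le_rfl
    simp at this
    nlinarith [hxpos 0]
  have hmpos : ∀ ω, 0 < max (c * x 0) (V ω) :=
    fun ω => lt_max_of_lt_left (mul_pos hc (hxpos 0))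
  have hCnn : 0 ≤ α / (c * (α - 1)) := by positivity
  -- integrability of h
  have hhmeas : Measurable fun ω => (V ω) ^ 2 / max (c * x 0) (V ω) :=
    (hVmeas.pow_const 2).div (measurable_const.max hVmeas)
  have hhint : Integrable (fun ω => (V ω) ^ 2 / max (c * x 0) (V ω)) μ := by
    refine hVint.mono hhmeas.aestronglyMeasurable (Filter.Eventually.of_forall fun ω => ?_)
    have h1 := hmpos ω
    have h2 := hVnn ω
    have h3 : V ω ≤ max (c * x 0) (V ω) := le_max_right _ _
    rw [Real.norm_eq_abs, Real.norm_eq_abs, abs_of_nonneg (by positivity),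
      abs_of_nonneg h2, div_le_iff₀ h1]
    nlinarith
  -- integrability of g n
  have hgmeas : ∀ n, Measurable fun ω => if V ω ≤ x n then (V ω) ^ 2 else 0 := by
    intro n
    exact Measurable.ite (measurableSet_le hVmeas measurable_const)
      (hVmeas.pow_const 2) measurable_const
  have hgint : ∀ n, Integrable (fun ω => if V ω ≤ x n then (V ω) ^ 2 else 0) μ := by
    intro n
    refine (hVint.const_mul (x n)).mono (hgmeas n).aestronglyMeasurable
      (Filter.Eventually.of_forall fun ω => ?_)
    rw [Real.norm_eq_abs, Real.norm_eq_abs]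
    by_cases hvx : V ω ≤ x n
    · rw [if_pos hvx, abs_of_nonneg (sq_nonneg _), abs_of_nonneg
        (mul_nonneg (hxpos n).le (hVnn ω))]
      nlinarith [hVnn ω]
    · rw [if_neg hvx]
      simp
      positivity
  have hRHSnn : 0 ≤ (α / (c * (α - 1))) * ∫ ω, (V ω) ^ 2 / max (c * x 0) (V ω) ∂μ := by
    apply mul_nonneg hCnn
    exact integral_nonneg fun ω => div_nonneg (sq_nonneg _) (hmpos ω).le
  apply tsum_le_of_sum_le' hRHSnn
  intro s
  calc ∑ n ∈ s, (∫ ω, (if V ω ≤ x n then (V ω) ^ 2 else 0) ∂μ) / x n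
      = ∑ n ∈ s, ∫ ω, (if V ω ≤ x n then (V ω) ^ 2 else 0) / x n ∂μ := by
        refine Finset.sum_congr rfl fun n _ => ?_
        rw [integral_div]
    _ = ∫ ω, ∑ n ∈ s, (if V ω ≤ x n then (V ω) ^ 2 else 0) / x n ∂μ :=
        (integral_finset_sum s fun n _ => (hgint n).div_const _).symm
    _ ≤ ∫ ω, (α / (c * (α - 1))) * ((V ω) ^ 2 / max (c * x 0) (V ω)) ∂μ := by
        refine integral_mono (integrable_finset_sum s fun n _ => (hgint n).div_const _)
          (hhint.const_mul _) fun ω => ?_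
        exact ptwise_bound x c α hc hα hc1 hxpos hgrowth (V ω) (hVnn ω) s
    _ = (α / (c * (α - 1))) * ∫ ω, (V ω) ^ 2 / max (c * x 0) (V ω) ∂μ :=
        integral_const_mul _ _
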